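/- Let a, b, c, d, t, u, v be integers with a + d = b + c = t, u² = t² + 4(a − b)(b − d), and v² = t² − 4(a − b)(b − d). Then u + v and u − v are both even, and the integers r = (u + v)/2 and s = (u − v)/2 satisfy r² + s² = t² and rs = 2(a − b)(b − d). -/
import Mathlib


/-- Given the two discriminant conditions under the ansatz a + d = b + c = t,
u + v and u − v are even, and r = (u+v)/2, s = (u−v)/2 form a Pythagorean
triple with t and satisfy rs = 2(a−b)(b−d). -/
theorem stmt_5 (a b c d t u v : ℤ) (h1 : a + d = t) (h2 : b + c = t)
    (hu : u ^ 2 = t ^ 2 + 4 * (a - b) * (b - d))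
    (hv : v ^ 2 = t ^ 2 - 4 * (a - b) * (b - d)) :
    Even (u + v) ∧ Even (u - v) ∧
      ((u + v) / 2) ^ 2 + ((u - v) / 2) ^ 2 = t ^ 2 ∧
      ((u + v) / 2) * ((u - v) / 2) = 2 * (a - b) * (b - d) := by
  have hpar : Even u ↔ Even v := by
    have h : Even (u ^ 2 - v ^ 2) := ⟨4 * (a - b) * (b - d), by linarith⟩
    have := Int.even_sub.mp h
    simpa [Int.even_pow] using this
  have heven : Even (u + v) := by
    rcases Int.even_or_odd u with h | h
    · exact Even.add h (hpar.mp h)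
    · exact Odd.add_odd h (by
        rcases Int.even_or_odd v with hv' | hv'
        · exact absurd (hpar.mpr hv') (Int.not_even_iff_odd.mpr h)
        · exact hv')
  have heven' : Even (u - v) := by
    rcases heven with ⟨k, hk⟩
    exact ⟨k - v, by linarith⟩
  refine ⟨heven, heven', ?_, ?_⟩
  · obtain ⟨k, hk⟩ := heven
    obtain ⟨m, hm⟩ := heven'
    have hk2 : u + v = 2 * k := by linarith
    have hm2 : u - v = 2 * m := by linarith
    rw [hk2, hm2, Int.mul_ediv_cancel_left _ (by norm_num), Int.mul_ediv_cancel_left _ (by norm_num)]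
    have hu2 : u = k + m := by linarith
    have hv2 : v = k - m := by linarith
    subst hu2 hv2
    nlinarith [hu, hv]
  · obtain ⟨k, hk⟩ := heven
    obtain ⟨m, hm⟩ := heven'
    have hk2 : u + v = 2 * k := by linarith
    have hm2 : u - v = 2 * m := by linarith
    rw [hk2, hm2, Int.mul_ediv_cancel_left _ (by norm_num), Int.mul_ediv_cancel_left _ (by norm_num)]
    have hu2 : u = k + m := by linarith
    have hv2 : v = k - m := by linarith
    subst hu2 hv2
    nlinarith [hu, hv]
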